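/- Let (V,*) be a magmatic algebra and extend * to T(V) as in the canonical extension. Then for every k ∈ ℕ, V^{⊗k} * T(V) ⊆ V^{⊗k}; that is, the homogeneous components of T(V) are stable under right *-multiplication by arbitrary elements of T(V). -/

import Mathlib

open scoped TensorProduct

noncomputable section

variable (K V : Type*) [Field K] [AddCommGroup V] [Module K V]

/-- The deshuffling coproduct on the tensor algebra: the unique algebra morphism
sending `x : V` to `x ⊗ 1 + 1 ⊗ x`. -/
def deshuffle : TensorAlgebra K V →ₐ[K]
    TensorAlgebra K V ⊗[K] TensorAlgebra K V :=
  TensorAlgebra.lift K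
    (((TensorProduct.mk K (TensorAlgebra K V) (TensorAlgebra K V)).flip 1) ∘ₗ TensorAlgebra.ι K
      + (TensorProduct.mk K (TensorAlgebra K V) (TensorAlgebra K V) 1) ∘ₗ TensorAlgebra.ι K)

/-- The counit of the tensor algebra: the algebra morphism killing `V`. -/
def tensorCounit : TensorAlgebra K V →ₐ[K] K :=
  TensorAlgebra.lift K (0 : V →ₗ[K] K)

variable {K V}

/-- `star` is the canonical extension to `T(V)` of the magmatic product `m` on `V`:
(i) `f*1 = f`; (ii) `1*f = ε(f)1`; (iii) `x*(fy) = (x*f)*y − x*(f*y)`;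
(iv) `(fg)*h = Σ (f*h⁽¹⁾)(g*h⁽²⁾)`, and `star` restricted to `V` is `m`. -/
def IsMagExt (m : V →ₗ[K] V →ₗ[K] V)
    (star : TensorAlgebra K V →ₗ[K] TensorAlgebra K V →ₗ[K] TensorAlgebra K V) : Prop :=
  (∀ x y : V, star (TensorAlgebra.ι K x) (TensorAlgebra.ι K y) = TensorAlgebra.ι K (m x y)) ∧
  (∀ f, star f 1 = f) ∧
  (∀ f, star 1 f = (tensorCounit K V f) • 1) ∧
  (∀ (x : V) (f : TensorAlgebra K V) (y : V),
    star (TensorAlgebra.ι K x) (f * TensorAlgebra.ι K y)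
      = star (star (TensorAlgebra.ι K x) f) (TensorAlgebra.ι K y)
        - star (TensorAlgebra.ι K x) (star f (TensorAlgebra.ι K y))) ∧
  (∀ f g h, star (f * g) h
      = LinearMap.mul' K (TensorAlgebra K V)
          (TensorProduct.map (star f) (star g) (deshuffle K V h)))


lemma deshuffle_ι_apply (y : V) :
    deshuffle K V (TensorAlgebra.ι K y)
      = TensorAlgebra.ι K y ⊗ₜ[K] 1 + 1 ⊗ₜ[K] TensorAlgebra.ι K y := by
  simp [deshuffle, TensorAlgebra.lift_ι_apply]

lemma tensorCounit_ι_apply (y : V) : tensorCounit K V (TensorAlgebra.ι K y) = 0 := by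
  simp [tensorCounit, TensorAlgebra.lift_ι_apply]


/-- homogeneous components `V^{⊗k}` of `T(V)` are stable under
right `*`-multiplication by arbitrary elements of `T(V)`. -/
theorem homogeneous_components_star_stable (m : V →ₗ[K] V →ₗ[K] V)
    (star : TensorAlgebra K V →ₗ[K] TensorAlgebra K V →ₗ[K] TensorAlgebra K V)
    (hstar : IsMagExt m star) :
    ∀ (k : ℕ) (f g : TensorAlgebra K V),
      f ∈ (LinearMap.range (TensorAlgebra.ι K : V →ₗ[K] TensorAlgebra K V)) ^ k →
        star f g ∈ (LinearMap.range (TensorAlgebra.ι K : V →ₗ[K] TensorAlgebra K V)) ^ k := by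
  obtain ⟨hmm, hone, hε, hxy, hmul⟩ := hstar
  set W := LinearMap.range (TensorAlgebra.ι K : V →ₗ[K] TensorAlgebra K V) with hW
  -- `star` on `W × W` lands in `W`
  have hWW : ∀ a ∈ W, ∀ b ∈ W, star a b ∈ W := by
    rintro a ⟨x, rfl⟩ b ⟨y, rfl⟩
    exact ⟨m x y, (hmm x y).symm⟩
  -- Lemma A : star of W^n by ι y stays in W^n
  have hA : ∀ (n : ℕ) (f : TensorAlgebra K V), f ∈ W ^ n → ∀ y : V,
      star f (TensorAlgebra.ι K y) ∈ W ^ n := by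
    intro n
    induction n with
    | zero =>
      intro f hf y
      rw [pow_zero] at hf
      rw [Submodule.mem_one] at hf
      obtain ⟨c, rfl⟩ := hf
      rw [Algebra.algebraMap_eq_smul_one, map_smul, LinearMap.smul_apply, hε,
        tensorCounit_ι_apply, zero_smul, smul_zero]
      exact zero_mem _
    | succ n ih =>
      intro f hf y
      rw [pow_succ'] at hf
      refine Submodule.mul_induction_on hf ?_ ?_
      · intro a ha b hb
        obtain ⟨x, rfl⟩ := ha
        rw [hmul, deshuffle_ι_apply, map_add, map_add, TensorProduct.map_tmul,
          TensorProduct.map_tmul, LinearMap.mul'_apply, LinearMap.mul'_apply,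
          hone, hone, hmm]
        rw [pow_succ']
        exact add_mem
          (Submodule.mul_mem_mul (LinearMap.mem_range_self _ _) hb)
          (Submodule.mul_mem_mul (LinearMap.mem_range_self _ _) (ih b hb y))
      · intro a b ha hb
        rw [map_add, LinearMap.add_apply]
        exact add_mem ha hb
  -- Lemma B : star (ι x) g ∈ W for g in any W^n
  have hB : ∀ (n : ℕ) (g : TensorAlgebra K V), g ∈ W ^ n → ∀ x : V,
      star (TensorAlgebra.ι K x) g ∈ W := by
    intro n
    induction n with
    | zero =>
      intro g hg x
      rw [pow_zero] at hg
      rw [Submodule.mem_one] at hg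
      obtain ⟨c, rfl⟩ := hg
      rw [Algebra.algebraMap_eq_smul_one, map_smul, hone]
      exact Submodule.smul_mem _ _ (LinearMap.mem_range_self _ _)
    | succ n ih =>
      intro g hg x
      rw [pow_succ] at hg
      refine Submodule.mul_induction_on hg ?_ ?_
      · intro a ha b hb
        obtain ⟨y, rfl⟩ := hb
        rw [hxy]
        refine sub_mem ?_ (ih _ (hA n a ha y) x)
        have hxa : star (TensorAlgebra.ι K x) a ∈ W := ih a ha x
        exact hWW _ hxa _ (LinearMap.mem_range_self _ _)
      · intro a b ha hb
        rw [map_add]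
        exact add_mem ha hb
  -- everything is in the supremum of the powers
  have htop : (⨆ n, W ^ n) = ⊤ :=
    (DirectSum.Decomposition.isInternal
      ((W ^ ·) : ℕ → Submodule K (TensorAlgebra K V))).submodule_iSup_eq_top
  have hmemtop : ∀ g : TensorAlgebra K V, g ∈ ⨆ n, W ^ n := by
    intro g; rw [htop]; exact Submodule.mem_top
  -- Lemma B' : star (ι x) g ∈ W for all g
  have hB' : ∀ (x : V) (g : TensorAlgebra K V), star (TensorAlgebra.ι K x) g ∈ W := by
    intro x g
    refine Submodule.iSup_induction (motive := fun t => star (TensorAlgebra.ι K x) t ∈ W)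
      (fun n => W ^ n) (hmemtop g) (fun n t ht => hB n t ht x) (by simp) ?_
    intro a b ha hb
    rw [map_add]
    exact add_mem ha hb
  -- main induction on k
  intro k
  induction k with
  | zero =>
    intro f g hf
    rw [pow_zero] at hf ⊢
    rw [Submodule.mem_one] at hf
    obtain ⟨c, rfl⟩ := hf
    rw [Algebra.algebraMap_eq_smul_one, map_smul, LinearMap.smul_apply, hε]
    exact Submodule.smul_mem _ _ (Submodule.smul_mem _ _ (Submodule.mem_one.mpr ⟨1, map_one _⟩))
  | succ k ih =>
    intro f g hf
    rw [pow_succ'] at hf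
    refine Submodule.mul_induction_on hf ?_ ?_
    · intro a ha b hb
      obtain ⟨x, rfl⟩ := ha
      rw [hmul, pow_succ']
      induction deshuffle K V g using TensorProduct.induction_on with
      | zero => simp only [map_zero]; exact zero_mem _
      | tmul u v =>
        rw [TensorProduct.map_tmul, LinearMap.mul'_apply]
        exact Submodule.mul_mem_mul (hB' x u) (ih b v hb)
      | add u v hu hv =>
        rw [map_add, map_add]
        exact add_mem hu hv
    · intro a b ha hb
      rw [map_add, LinearMap.add_apply]
      exact add_mem ha hb

end
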